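/- For any integer m ≥ 1, the multiset dimension of the path graph P_m equals 1 if and only if m ≥ 2 (and equals 0 for m = 1); moreover any connected graph with multiset dimension at most 1 is a path. -/

import Mathlib

open SimpleGraph



/-- B is an m-resolving set: distinct vertices get distinct multisets of distances to B. -/
def mResolving {V : Type*} (G : SimpleGraph V) (B : Finset V) : Prop :=
  ∀ u v : V, u ≠ v →
    Multiset.map (fun b => G.dist u b) B.val ≠ Multiset.map (fun b => G.dist v b) B.val

/-- The multiset dimension: least cardinality of an m-resolving set, or ∞ if none exists. -/
noncomputable def Mdim {V : Type*} (G : SimpleGraph V) : ℕ∞ :=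
  sInf {n : ℕ∞ | ∃ B : Finset V, mResolving G B ∧ (B.card : ℕ∞) = n}



lemma path_walk_bound {m : ℕ} {u v : Fin m} (p : (SimpleGraph.pathGraph m).Walk u v) :
    u.val ≤ v.val + p.length ∧ v.val ≤ u.val + p.length := by
  induction p with
  | nil => simp
  | @cons a b c h q ih =>
    rw [SimpleGraph.pathGraph_adj] at h
    simp only [SimpleGraph.Walk.length_cons]
    omega

lemma path_dist_zero {m : ℕ} (hm : 1 ≤ m) (u : Fin m) :
    (SimpleGraph.pathGraph m).dist u ⟨0, hm⟩ = u.val := by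
  have hconn : (SimpleGraph.pathGraph m).Connected := by
    cases m with
    | zero => omega
    | succ k => exact SimpleGraph.pathGraph_connected k
  refine le_antisymm ?_ ?_
  · -- upper bound by induction on u.val
    obtain ⟨i, hi⟩ := u
    induction i with
    | zero => simp
    | succ j ihj =>
      have hj : j < m := by omega
      have hadj : (SimpleGraph.pathGraph m).Adj ⟨j+1, hi⟩ ⟨j, hj⟩ := by
        rw [SimpleGraph.pathGraph_adj]; right; rfl
      calc (SimpleGraph.pathGraph m).dist ⟨j+1, hi⟩ ⟨0, hm⟩
          ≤ (SimpleGraph.pathGraph m).dist ⟨j+1, hi⟩ ⟨j, hj⟩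
            + (SimpleGraph.pathGraph m).dist ⟨j, hj⟩ ⟨0, hm⟩ := hconn.dist_triangle
        _ ≤ 1 + j := by
            have h1 : (SimpleGraph.pathGraph m).dist ⟨j+1, hi⟩ ⟨j, hj⟩ = 1 :=
              (SimpleGraph.dist_eq_one_iff_adj).mpr hadj
            have h2 : (SimpleGraph.pathGraph m).dist ⟨j, hj⟩ ⟨0, hm⟩ ≤ j := by
              simpa using ihj hj
            omega
        _ = j + 1 := by omega
  · obtain ⟨p, hp⟩ := hconn.exists_walk_length_eq_dist u ⟨0, hm⟩
    have := path_walk_bound p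
    simp only [hp] at this
    omega

lemma iso_of_inj_dist (V : Type) [Fintype V] (G : SimpleGraph V) (hc : G.Connected) (x : V)
    (hinj : Function.Injective (fun v => G.dist v x)) :
    ∃ n : ℕ, Nonempty (G ≃g SimpleGraph.pathGraph n) := by
  have hne : (Finset.univ.image (fun v => G.dist v x)).Nonempty :=
    ⟨G.dist x x, Finset.mem_image.mpr ⟨x, Finset.mem_univ _, rfl⟩⟩
  set N : ℕ := (Finset.univ.image (fun v => G.dist v x)).max' hne with hN
  have hdle : ∀ v, G.dist v x ≤ N := fun v =>
    Finset.le_max' (Finset.univ.image (fun v => G.dist v x)) (G.dist v x)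
      (Finset.mem_image.mpr ⟨v, Finset.mem_univ _, rfl⟩)
  have fact1 : ∀ v, G.dist v x ≠ 0 → ∃ u, G.Adj v u ∧ G.dist u x + 1 = G.dist v x := by
    intro v hv
    obtain ⟨p, hp⟩ := hc.exists_walk_length_eq_dist v x
    cases p with
    | nil => simp at hv
    | @cons a b c h q =>
      refine ⟨b, h, ?_⟩
      have h1 : G.dist b x ≤ q.length := SimpleGraph.dist_le q
      have h0 : G.dist v b ≤ 1 := by
        have := SimpleGraph.dist_le h.toWalk
        simpa using this
      have h2 : G.dist v x ≤ G.dist v b + G.dist b x := hc.dist_triangle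
      simp only [SimpleGraph.Walk.length_cons] at hp
      omega
  have fact2 : ∀ u v, G.Adj u v → G.dist u x ≤ G.dist v x + 1 ∧ G.dist v x ≤ G.dist u x + 1 := by
    intro u v huv
    have h1 : G.dist u v = 1 := SimpleGraph.dist_eq_one_iff_adj.mpr huv
    have h2 : G.dist v u = 1 := SimpleGraph.dist_eq_one_iff_adj.mpr huv.symm
    constructor
    · have := hc.dist_triangle (u := u) (v := v) (w := x); omega
    · have := hc.dist_triangle (u := v) (v := u) (w := x); omega
  have fact3 : ∀ k ≤ N, ∃ v, G.dist v x = k := by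
    have step : ∀ j ≤ N, ∃ v, G.dist v x = N - j := by
      intro j hj
      induction j with
      | zero =>
        obtain ⟨v, _, hv⟩ := Finset.mem_image.mp
          ((Finset.univ.image (fun v => G.dist v x)).max'_mem hne)
        exact ⟨v, by omega⟩
      | succ i ih =>
        obtain ⟨v, hv⟩ := ih (by omega)
        obtain ⟨u, _, hu⟩ := fact1 v (by omega)
        exact ⟨u, by omega⟩
    intro k hk
    obtain ⟨v, hv⟩ := step (N - k) (by omega)
    exact ⟨v, by omega⟩
  refine ⟨N + 1, ⟨?_⟩⟩
  have ebij : Function.Bijective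
      (fun v => (⟨G.dist v x, by have := hdle v; omega⟩ : Fin (N+1))) := by
    constructor
    · intro u v huv
      exact hinj (show G.dist u x = G.dist v x by simpa [Fin.mk.injEq] using huv)
    · rintro ⟨k, hk⟩
      obtain ⟨v, hv⟩ := fact3 k (by omega)
      exact ⟨v, by simp [hv]⟩
  refine ⟨Equiv.ofBijective _ ebij, ?_⟩
  intro u v
  simp only [Equiv.ofBijective_apply, SimpleGraph.pathGraph_adj, Fin.val_mk]
  constructor
  · rintro (h | h)
    · obtain ⟨w, hw, hw'⟩ := fact1 v (by omega)
      have : w = u := hinj (show G.dist w x = G.dist u x by omega)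
      subst this; exact hw.symm
    · obtain ⟨w, hw, hw'⟩ := fact1 u (by omega)
      have : w = v := hinj (show G.dist w x = G.dist v x by omega)
      subst this; exact hw
  · intro h
    have h2 := fact2 u v h
    have h3 : G.dist u x ≠ G.dist v x := fun hEq => h.ne (hinj hEq)
    omega

theorem mdim_path :
    (∀ m : ℕ, 1 ≤ m → (Mdim (SimpleGraph.pathGraph m) = 1 ↔ 2 ≤ m)) ∧
    Mdim (SimpleGraph.pathGraph 1) = 0 ∧
    (∀ (V : Type) [Fintype V] (G : SimpleGraph V), G.Connected → Mdim G ≤ 1 →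
      ∃ n : ℕ, Nonempty (G ≃g SimpleGraph.pathGraph n)) := by
  have h1 : Mdim (SimpleGraph.pathGraph 1) = 0 := by
    have hres : mResolving (SimpleGraph.pathGraph 1) (∅ : Finset (Fin 1)) := by
      intro u v huv
      exact absurd (Subsingleton.elim u v) huv
    exact le_antisymm (sInf_le ⟨∅, hres, by simp⟩) zero_le
  have key : ∀ (V : Type) [Fintype V] (G : SimpleGraph V), G.Connected → Mdim G ≤ 1 →
      ∃ n : ℕ, Nonempty (G ≃g SimpleGraph.pathGraph n) := by
    intro V _ G hc hle
    have hex : ∃ B : Finset V, mResolving G B ∧ B.card ≤ 1 := by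
      by_contra hno
      push_neg at hno
      have h2 : (2 : ℕ∞) ≤ Mdim G := by
        apply le_sInf
        rintro n ⟨B, hB, rfl⟩
        have h2' : 2 ≤ B.card := hno B hB
        exact_mod_cast h2'
      have : (2 : ℕ∞) ≤ 1 := h2.trans hle
      norm_num at this
    obtain ⟨B, hB, hcard⟩ := hex
    rcases Nat.lt_or_ge B.card 1 with h | h
    · have hB0 : B = ∅ := Finset.card_eq_zero.mp (by omega)
      subst hB0
      have hsub : ∀ u v : V, u = v := by
        intro u v; by_contra hne
        exact hB u v hne (by simp)
      have hne : Nonempty V := hc.nonempty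
      have hcard1 : Fintype.card V = 1 :=
        Fintype.card_eq_one_iff.mpr ⟨hne.some, fun y => hsub y _⟩
      refine ⟨1, ⟨⟨Fintype.equivFinOfCardEq hcard1, ?_⟩⟩⟩
      intro a b
      have hab : a = b := hsub a b
      subst hab
      rw [SimpleGraph.pathGraph_adj]
      constructor
      · rintro (h | h) <;> simp at h
      · intro h; exact absurd rfl h.ne
    · have hc1 : B.card = 1 := le_antisymm hcard h
      obtain ⟨x, hx⟩ := Finset.card_eq_one.mp hc1
      subst hx
      apply iso_of_inj_dist V G hc x
      intro u v huv
      by_contra hne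
      have hd : G.dist u x = G.dist v x := huv
      exact hB u v hne (by simp [hd])
  refine ⟨?_, h1, key⟩
  intro m hm
  constructor
  · intro hMdim
    by_contra hlt
    have hm1 : m = 1 := by omega
    subst hm1
    rw [h1] at hMdim
    norm_num at hMdim
  · intro hm2
    have hres : mResolving (SimpleGraph.pathGraph m) ({⟨0, hm⟩} : Finset (Fin m)) := by
      intro u v huv
      simp only [Finset.singleton_val, Multiset.map_singleton, ne_eq, Multiset.singleton_inj]
      rw [path_dist_zero hm, path_dist_zero hm]
      exact fun h => huv (Fin.ext h)
    refine le_antisymm (sInf_le ⟨{⟨0, hm⟩}, hres, by simp⟩) ?_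
    apply le_sInf
    rintro n ⟨B, hB, rfl⟩
    have hB1 : 1 ≤ B.card := by
      by_contra hB0
      have : B = ∅ := Finset.card_eq_zero.mp (by omega)
      subst this
      have h01 : (⟨0, by omega⟩ : Fin m) ≠ ⟨1, by omega⟩ := by simp [Fin.ext_iff]
      exact hB _ _ h01 (by simp)
    exact_mod_cast hB1
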